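/- There exists a constant C > 0 such that for all positive integers k, λ(k) ≤ C · (log log(10 k))², where λ(k) = ∏_{p ∣ k, p > 2} (p-1)/(p-2). -/

import Mathlib

open Finset

noncomputable def thetaSum (n : ℕ) : ℝ :=
  ∑ p ∈ (Finset.Ioc 2 n).filter Nat.Prime, Real.log p

noncomputable def recipSum (n : ℕ) : ℝ :=
  ∑ p ∈ (Finset.Ioc 2 n).filter Nat.Prime, (1 : ℝ) / p

lemma thetaSum_nonneg (n : ℕ) : 0 ≤ thetaSum n := by
  apply Finset.sum_nonneg
  intro p hp
  simp only [mem_filter, mem_Ioc] at hp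
  apply Real.log_nonneg
  have : (1:ℕ) ≤ p := by omega
  exact_mod_cast this

lemma thetaSum_le (n : ℕ) : thetaSum n ≤ 2 * n * Real.log 2 := by
  have h1 : thetaSum n ≤ ∑ p ∈ (Finset.range (n+1)).filter Nat.Prime, Real.log p := by
    apply Finset.sum_le_sum_of_subset_of_nonneg
    · intro p hp
      simp only [mem_filter, mem_Ioc, mem_range] at hp ⊢
      exact ⟨by omega, hp.2⟩
    · intro p hp _
      simp only [mem_filter, mem_range] at hp
      exact Real.log_nonneg (by exact_mod_cast hp.2.one_lt.le)
  have h2 : ∑ p ∈ (Finset.range (n+1)).filter Nat.Prime, Real.log p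
      = Real.log (primorial n) := by
    rw [primorial]
    push_cast
    rw [Real.log_prod]
    intro p hp
    simp only [mem_filter, mem_range] at hp
    exact_mod_cast hp.2.pos.ne'
  have h3 : Real.log (primorial n) ≤ Real.log ((4:ℝ)^n) := by
    apply Real.log_le_log (by exact_mod_cast (primorial_pos n))
    exact_mod_cast primorial_le_4_pow n
  have h4 : Real.log ((4:ℝ)^n) = 2 * n * Real.log 2 := by
    rw [Real.log_pow, show (4:ℝ) = 2^2 by norm_num, Real.log_pow]
    push_cast; ring
  linarith

lemma filter_split (f : ℕ → ℝ) {a b : ℕ} (ha : 2 ≤ a) (hab : a ≤ b) :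
    ∑ p ∈ (Finset.Ioc 2 b).filter Nat.Prime, f p
      = ∑ p ∈ (Finset.Ioc 2 a).filter Nat.Prime, f p
        + ∑ p ∈ (Finset.Ioc a b).filter Nat.Prime, f p := by
  rw [← Finset.Ioc_union_Ioc_eq_Ioc ha hab, Finset.filter_union]
  apply Finset.sum_union
  apply Finset.disjoint_filter_filter
  simp only [Finset.disjoint_left, Finset.mem_Ioc]
  rintro x ⟨_, h1⟩ ⟨h2, _⟩
  omega


lemma tele (N : ℕ) : ∑ n ∈ Finset.Ioc 2 (N+2), ((1:ℝ)/(n-1) - 1/n) = 1/2 - 1/(N+2) := by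
  induction N with
  | zero => simp
  | succ m ih =>
    rw [show m + 1 + 2 = (m + 2) + 1 by ring,
      Finset.sum_Ioc_succ_top (by omega : 2 ≤ m + 2), ih]
    push_cast
    have : (0:ℝ) < (m:ℝ) + 2 := by positivity
    have : (m:ℝ) + 2 + 1 - 1 ≠ 0 := by linarith
    field_simp
    ring

lemma log2pos : (0:ℝ) < Real.log 2 := Real.log_pos (by norm_num)

lemma key (I : ℕ) (hI : 1 ≤ I) :
    recipSum (2^(I+1)) ≤ 2 * Real.log I + 5 - 4 / I
      + thetaSum (2^(I+1)) / ((2:ℝ)^I * I * Real.log 2) := by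
  induction I, hI using Nat.le_induction with
  | base =>
    have h1 : Finset.Ioc 2 (2^2) = ({3, 4} : Finset ℕ) := by decide
    have h2 : recipSum (2^2) = 1/3 := by
      rw [recipSum, h1, show Finset.filter Nat.Prime ({3,4} : Finset ℕ) = {3} by decide]
      norm_num
    rw [h2]
    have h3 := thetaSum_nonneg (2^2)
    have h5 : 0 ≤ thetaSum (2^2) / ((2:ℝ)^1 * (1:ℕ) * Real.log 2) := by
      apply div_nonneg h3
      have := log2pos
      push_cast
      nlinarith
    push_cast at h5 ⊢
    simp only [Real.log_one]
    nlinarith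
  | succ I hI ih =>
    have hL2pos : (0:ℝ) < Real.log 2 := log2pos
    have hIpos : (0:ℝ) < (I:ℝ)  := by exact_mod_cast hI
    have hpow : (2:ℕ) ≤ 2^(I+1) := by
      calc (2:ℕ) = 2^1 := by norm_num
      _ ≤ 2^(I+1) := Nat.pow_le_pow_right (by norm_num) (by omega)
    have hpow2 : (2:ℕ)^(I+1) ≤ 2^(I+2) := Nat.pow_le_pow_right (by norm_num) (by omega)
    have hsplitR := filter_split (fun p => (1:ℝ)/p) hpow hpow2
    have hsplitT := filter_split (fun p => Real.log p) hpow hpow2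
    set c : ℝ := 1 / ((2:ℝ)^(I+1) * ((I:ℝ)+1) * Real.log 2) with hc
    set a : ℝ := 1 / ((2:ℝ)^I * (I:ℝ) * Real.log 2) with ha
    have hcpos : 0 < c := by rw [hc]; positivity
    have hapos : 0 < a := by rw [ha]; positivity
    -- block bound
    have hblock : ∑ p ∈ (Finset.Ioc (2^(I+1)) (2^(I+2))).filter Nat.Prime, (1:ℝ)/p
        ≤ ∑ p ∈ (Finset.Ioc (2^(I+1)) (2^(I+2))).filter Nat.Prime, Real.log p * c := by
      apply Finset.sum_le_sum
      intro p hp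
      simp only [Finset.mem_filter, Finset.mem_Ioc] at hp
      have hp1 : (2:ℝ)^(I+1) < (p:ℝ) := by
        have h := hp.1.1
        have : ((2:ℕ)^(I+1) : ℝ) < (p:ℝ) := by exact_mod_cast h
        push_cast at this
        exact this
      have hppos : (0:ℝ) < p := lt_trans (by positivity) hp1
      have hlogp : ((I:ℝ)+1) * Real.log 2 ≤ Real.log p := by
        have h := Real.log_le_log (by positivity : (0:ℝ) < (2:ℝ)^(I+1)) hp1.le
        rw [Real.log_pow] at h
        push_cast at h
        exact h
      have hkey : ((I:ℝ)+1) * Real.log 2 * c = 1/(2:ℝ)^(I+1) := by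
        rw [hc]
        field_simp
      calc (1:ℝ)/p ≤ 1/(2:ℝ)^(I+1) :=
            one_div_le_one_div_of_le (by positivity) hp1.le
        _ = ((I:ℝ)+1) * Real.log 2 * c := hkey.symm
        _ ≤ Real.log p * c := mul_le_mul_of_nonneg_right hlogp hcpos.le
    have hθ1 : thetaSum (2^(I+1)) ≤ 2 * (2:ℝ)^(I+1) * Real.log 2 := by
      have h := thetaSum_le (2^(I+1))
      push_cast at h
      exact h
    have hab : c ≤ a := by
      rw [ha, hc]
      apply one_div_le_one_div_of_le (by positivity)
      have h1 : (2:ℝ)^I ≤ (2:ℝ)^(I+1) := by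
        apply pow_le_pow_right₀ (by norm_num) (by omega)
      exact mul_le_mul_of_nonneg_right
        (mul_le_mul h1 (by linarith) hIpos.le (by positivity)) hL2pos.le
    have hθ1nn := thetaSum_nonneg (2^(I+1))
    have hlog : 1/((I:ℝ)+1) ≤ Real.log ((I:ℝ)+1) - Real.log (I:ℝ) := by
      have hx : (0:ℝ) < (I:ℝ)/((I:ℝ)+1) := by positivity
      have h := Real.log_le_sub_one_of_pos hx
      rw [Real.log_div (ne_of_gt hIpos) (by positivity)] at h
      have h1 : (I:ℝ)/((I:ℝ)+1) - 1 = -(1/((I:ℝ)+1)) := by field_simp; ring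
      rw [h1] at h
      linarith
    -- key numeric inequality
    have h2 : (2 * (2:ℝ)^(I+1) * Real.log 2) * a = 4/(I:ℝ) := by
      rw [ha, show ((2:ℝ))^(I+1) = 2 * (2:ℝ)^I by ring]
      field_simp
      ring
    have h3 : (2 * (2:ℝ)^(I+1) * Real.log 2) * c = 2/((I:ℝ)+1) := by
      rw [hc]
      field_simp
    have hmain : thetaSum (2^(I+1)) * (a - c)
        ≤ 2 * Real.log ((I:ℝ)+1) - 2 * Real.log (I:ℝ) + 4/(I:ℝ) - 4/((I:ℝ)+1) := by
      have h1 : thetaSum (2^(I+1)) * (a - c) ≤ (2 * (2:ℝ)^(I+1) * Real.log 2) * (a - c) :=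
        mul_le_mul_of_nonneg_right hθ1 (by linarith)
      have h4 : (2 * (2:ℝ)^(I+1) * Real.log 2) * (a - c) = 4/(I:ℝ) - 2/((I:ℝ)+1) := by
        rw [mul_sub, h2, h3]
      rw [h4] at h1
      have e1 : 2/((I:ℝ)+1) = 2 * (1/((I:ℝ)+1)) := by ring
      have e2 : 4/((I:ℝ)+1) = 4 * (1/((I:ℝ)+1)) := by ring
      linarith
    -- now combine
    have hT : ∑ p ∈ (Finset.Ioc (2^(I+1)) (2^(I+2))).filter Nat.Prime, Real.log p * c
        = (thetaSum (2^(I+2)) - thetaSum (2^(I+1))) * c := by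
      rw [← Finset.sum_mul]
      congr 1
      rw [thetaSum, thetaSum, hsplitT]
      ring
    rw [hT] at hblock
    have hihd : thetaSum (2^(I+1)) / ((2:ℝ)^I * (I:ℝ) * Real.log 2) = thetaSum (2^(I+1)) * a := by
      rw [ha]; field_simp
    have hd2 : thetaSum (2^(I+2)) / ((2:ℝ)^(I+1) * ((I:ℝ)+1) * Real.log 2)
        = thetaSum (2^(I+2)) * c := by
      rw [hc]; field_simp
    have hstep : recipSum (2^(I+2)) = recipSum (2^(I+1))
        + ∑ p ∈ (Finset.Ioc (2^(I+1)) (2^(I+2))).filter Nat.Prime, (1:ℝ)/p := by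
      rw [recipSum, recipSum]
      exact hsplitR
    rw [hihd] at ih
    have hexp : thetaSum (2^(I+1)) * (a - c)
        = thetaSum (2^(I+1)) * a - thetaSum (2^(I+1)) * c := by ring
    push_cast
    simp only [show I+1+1 = I+2 from rfl]
    rw [hd2, hstep]
    linarith [hblock, ih, hmain, hexp.symm.le, hexp.le]

lemma key2 (I : ℕ) (hI : 1 ≤ I) : recipSum (2^(I+1)) ≤ 2 * Real.log I + 5 := by
  have h := key I hI
  have hIpos : (0:ℝ) < I := by exact_mod_cast hI
  have hL2 := log2pos
  have hθ : thetaSum (2^(I+1)) ≤ 2 * (2:ℝ)^(I+1) * Real.log 2 := by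
    have h := thetaSum_le (2^(I+1)); push_cast at h; exact h
  have hd : thetaSum (2^(I+1)) / ((2:ℝ)^I * I * Real.log 2) ≤ 4 / I := by
    rw [div_le_div_iff₀ (by positivity) hIpos]
    have h1 : (2:ℝ)^(I+1) = 2 * (2:ℝ)^I := by ring
    rw [h1] at hθ
    nlinarith [mul_le_mul_of_nonneg_right hθ hIpos.le]
  linarith

noncomputable def lam (k : ℕ) : ℝ :=
  ∏ p ∈ k.primeFactors.filter (fun p => 2 < p), ((p : ℝ) - 1) / ((p : ℝ) - 2)

set_option maxHeartbeats 1000000 in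
/-- `λ(k) ≪ (log log (10 k))²`. -/
theorem lam_bound :
    ∃ C > 0, ∀ k : ℕ, 0 < k → lam k ≤ C * (Real.log (Real.log (10 * k))) ^ 2 := by
  refine ⟨49 * Real.exp 9, by positivity, fun k hk => ?_⟩
  have hk1 : (1:ℝ) ≤ (k:ℝ) := by exact_mod_cast hk
  set L : ℝ := Real.log (10 * (k:ℝ)) with hLdef
  have hL2 : (2:ℝ) ≤ L := by
    have h10 : (2:ℝ) < Real.log 10 := by
      rw [Real.lt_log_iff_exp_lt (by norm_num)]
      have h := Real.exp_one_lt_d9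
      have : Real.exp 2 = Real.exp 1 * Real.exp 1 := by
        rw [← Real.exp_add]; norm_num
      nlinarith [Real.exp_pos 1]
    have : Real.log 10 ≤ L := Real.log_le_log (by norm_num) (by nlinarith)
    linarith
  have hlogL : Real.log 2 ≤ Real.log L := Real.log_le_log (by norm_num) hL2
  have hL2pos := log2pos
  set J : ℕ := Nat.log 2 k with hJdef
  set I : ℕ := Nat.clog 2 (J + 4) with hIdef
  have hI2 : 2 ≤ I := by
    have : 2^1 < J + 4 := by omega
    have := (Nat.lt_clog_iff_pow_lt (by norm_num)).mpr this
    omega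
  have hI1 : 1 ≤ I := by omega
  have hIposR : (0:ℝ) < I := by exact_mod_cast hI1
  have hJk : 2^J ≤ k := Nat.pow_log_le_self 2 hk.ne'
  have hkJ : k < 2^(J+1) := Nat.lt_pow_succ_log_self (by norm_num) k
  have hJI : J + 4 ≤ 2^I := Nat.le_pow_clog (by norm_num) _
  have hIu : 2^(I-1) < J + 4 := Nat.pow_pred_clog_lt_self (b := 2) (x := J + 4) (by norm_num) (by omega)
  set N : ℕ := 2^(I+1) with hNdef
  set P : Finset ℕ := k.primeFactors.filter (fun p => 2 < p) with hPdef
  have hPfact : ∀ p ∈ P, p.Prime ∧ 2 < p ∧ p ∣ k := by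
    intro p hp
    rw [hPdef, Finset.mem_filter, Nat.mem_primeFactors] at hp
    exact ⟨hp.1.1, hp.2, hp.1.2.1⟩
  -- step 1 : lam k ≤ exp of sum
  have hexp : lam k ≤ Real.exp (∑ p ∈ P, 1/((p:ℝ)-2)) := by
    rw [lam, Real.exp_sum]
    apply Finset.prod_le_prod
    · intro p hp
      have h3 : (3:ℝ) ≤ (p:ℝ) := by exact_mod_cast (hPfact p hp).2.1
      exact div_nonneg (by linarith) (by linarith)
    · intro p hp
      have h3 : (3:ℝ) ≤ (p:ℝ) := by exact_mod_cast (hPfact p hp).2.1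
      have hne : (p:ℝ) - 2 ≠ 0 := by linarith
      have : ((p:ℝ)-1)/((p:ℝ)-2) = 1/((p:ℝ)-2) + 1 := by field_simp; ring
      rw [this]
      exact Real.add_one_le_exp _
  -- split the sum
  have hsplit : ∑ p ∈ P, 1/((p:ℝ)-2)
      = ∑ p ∈ P.filter (fun p => p ≤ N), 1/((p:ℝ)-2)
        + ∑ p ∈ P.filter (fun p => ¬ p ≤ N), 1/((p:ℝ)-2) :=
    (Finset.sum_filter_add_sum_filter_not P _ _).symm
  have hN2 : 2 ≤ N := by
    rw [hNdef]
    calc (2:ℕ) = 2^1 := by norm_num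
    _ ≤ 2^(I+1) := Nat.pow_le_pow_right (by norm_num) (by omega)
  -- small part
  have hAsub : ∑ p ∈ P.filter (fun p => p ≤ N), 1/(p:ℝ) ≤ recipSum N := by
    apply Finset.sum_le_sum_of_subset_of_nonneg
    · intro p hp
      rw [Finset.mem_filter] at hp
      obtain ⟨hp1, hp2⟩ := hp
      have := hPfact p hp1
      simp only [Finset.mem_filter, Finset.mem_Ioc]
      exact ⟨⟨this.2.1, hp2⟩, this.1⟩
    · intro p _ _
      positivity
  have hrecip : recipSum N ≤ 2 * Real.log I + 5 := by
    rw [hNdef]; exact key2 I hI1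
  have hBsub : ∑ p ∈ P.filter (fun p => p ≤ N), (1/((p:ℝ)-1) - 1/(p:ℝ)) ≤ 1/2 := by
    have htel : ∑ n ∈ Finset.Ioc 2 N, ((1:ℝ)/(n-1) - 1/n) ≤ 1/2 := by
      have h := tele (N-2)
      rw [show N - 2 + 2 = N from by omega] at h
      rw [h]
      have hpos : (0:ℝ) ≤ 1/(((N-2:ℕ):ℝ)+2) := by positivity
      linarith
    refine le_trans (Finset.sum_le_sum_of_subset_of_nonneg ?_ ?_) htel
    · intro p hp
      rw [Finset.mem_filter] at hp
      have := hPfact p hp.1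
      simp only [Finset.mem_Ioc]
      exact ⟨this.2.1, hp.2⟩
    · intro n hn _
      simp only [Finset.mem_Ioc] at hn
      have h3 : (3:ℝ) ≤ (n:ℝ) := by exact_mod_cast hn.1
      have : 1/(n:ℝ) ≤ 1/((n:ℝ)-1) :=
        one_div_le_one_div_of_le (by linarith) (by linarith)
      linarith
  have hsmall : ∑ p ∈ P.filter (fun p => p ≤ N), 1/((p:ℝ)-2) ≤ 2 * Real.log I + 8 := by
    have hptw : ∀ p ∈ P.filter (fun p => p ≤ N),
        1/((p:ℝ)-2) ≤ 1/(p:ℝ) + 6*(1/((p:ℝ)-1) - 1/(p:ℝ)) := by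
      intro p hp
      rw [Finset.mem_filter] at hp
      have h3 : (3:ℝ) ≤ (p:ℝ) := by exact_mod_cast (hPfact p hp.1).2.1
      have h1 : (0:ℝ) < (p:ℝ) - 2 := by linarith
      have h2 : (0:ℝ) < (p:ℝ) - 1 := by linarith
      have h0 : (0:ℝ) < (p:ℝ) := by linarith
      have eR : 1/(p:ℝ) + 6*(1/((p:ℝ)-1) - 1/(p:ℝ)) = ((p:ℝ)+5)/((p:ℝ)*((p:ℝ)-1)) := by
        field_simp
        ring
      rw [eR, div_le_div_iff₀ h1 (mul_pos h0 h2)]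
      nlinarith [h3, h0, h2]
    calc ∑ p ∈ P.filter (fun p => p ≤ N), 1/((p:ℝ)-2)
        ≤ ∑ p ∈ P.filter (fun p => p ≤ N), (1/(p:ℝ) + 6*(1/((p:ℝ)-1) - 1/(p:ℝ))) :=
          Finset.sum_le_sum hptw
      _ = ∑ p ∈ P.filter (fun p => p ≤ N), 1/(p:ℝ)
          + 6 * ∑ p ∈ P.filter (fun p => p ≤ N), (1/((p:ℝ)-1) - 1/(p:ℝ)) := by
          rw [Finset.sum_add_distrib, Finset.mul_sum]
      _ ≤ (2 * Real.log I + 5) + 6 * (1/2) := by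
          have h6 : 6 * ∑ p ∈ P.filter (fun p => p ≤ N), (1/((p:ℝ)-1) - 1/(p:ℝ))
              ≤ 6 * (1/2) := by linarith [hBsub]
          linarith [hAsub, hrecip]
      _ = 2 * Real.log I + 8 := by ring
  -- big part
  have hbig : ∑ p ∈ P.filter (fun p => ¬ p ≤ N), 1/((p:ℝ)-2) ≤ 1 := by
    set Q : Finset ℕ := P.filter (fun p => ¬ p ≤ N) with hQdef
    have hQsub : Q ⊆ k.primeFactors := by
      intro p hp
      rw [hQdef, Finset.mem_filter] at hp
      rw [hPdef, Finset.mem_filter] at hp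
      exact hp.1.1
    have hQlt : ∀ p ∈ Q, N < p := by
      intro p hp
      rw [hQdef, Finset.mem_filter] at hp
      omega
    have hprodk : ∏ p ∈ Q, p ∣ k :=
      dvd_trans (Finset.prod_dvd_prod_of_subset Q k.primeFactors (fun p => p) hQsub)
        (Nat.prod_primeFactors_dvd k)
    have hNm : N ^ Q.card ≤ k := by
      refine le_trans (Finset.pow_card_le_prod Q (fun p => p) N ?_) (Nat.le_of_dvd hk hprodk)
      intro p hp
      exact (hQlt p hp).le
    have hmlog : (Q.card : ℝ) * (((I:ℝ)+1) * Real.log 2) ≤ Real.log k := by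
      have hcast : ((N:ℝ))^(Q.card) ≤ (k:ℝ) := by exact_mod_cast hNm
      have h := Real.log_le_log (by positivity) hcast
      rw [Real.log_pow] at h
      have hNlog : Real.log (N:ℝ) = ((I:ℝ)+1) * Real.log 2 := by
        rw [hNdef]
        push_cast
        rw [Real.log_pow]
        push_cast
        ring
      rw [hNlog] at h
      exact h
    have hlogk : Real.log k ≤ (2:ℝ)^I * Real.log 2 := by
      have h1 : (k:ℝ) ≤ (2:ℝ)^(J+1) := by
        exact_mod_cast hkJ.le
      have h2 := Real.log_le_log (by linarith) h1
      rw [Real.log_pow] at h2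
      have h3 : ((J:ℝ)+1) ≤ (2:ℝ)^I := by
        have : ((J+4 : ℕ):ℝ) ≤ ((2^I : ℕ):ℝ) := by exact_mod_cast hJI
        push_cast at this
        linarith
      push_cast at h2
      nlinarith [hL2pos]
    have hmcard : (Q.card : ℝ) ≤ (2:ℝ)^I := by
      have hm0 : (0:ℝ) ≤ (Q.card : ℝ) := Nat.cast_nonneg _
      have h5 : (Q.card:ℝ) * Real.log 2 ≤ (2:ℝ)^I * Real.log 2 := by
        nlinarith [hmlog, hlogk, mul_nonneg (mul_nonneg hm0 hIposR.le) hL2pos.le]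
      exact le_of_mul_le_mul_right h5 hL2pos
    have hptw : ∀ p ∈ Q, 1/((p:ℝ)-2) ≤ 1/(2:ℝ)^I := by
      intro p hp
      have h := hQlt p hp
      have hpN : ((N:ℝ)) < (p:ℝ) := by exact_mod_cast h
      have hNval : (N:ℝ) = 2 * (2:ℝ)^I := by
        rw [hNdef]; push_cast; ring
      have h2I : (2:ℝ) ≤ (2:ℝ)^I := by
        calc (2:ℝ) = 2^1 := by norm_num
        _ ≤ (2:ℝ)^I := pow_le_pow_right₀ (by norm_num) (by omega)
      apply one_div_le_one_div_of_le (by positivity)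
      nlinarith
    calc ∑ p ∈ Q, 1/((p:ℝ)-2) ≤ ∑ p ∈ Q, 1/(2:ℝ)^I := Finset.sum_le_sum hptw
      _ = (Q.card : ℝ) * (1/(2:ℝ)^I) := by
          rw [Finset.sum_const, nsmul_eq_mul]
      _ ≤ 1 := by
          rw [mul_one_div, div_le_one (by positivity)]
          exact hmcard
  -- combine
  have hE : ∑ p ∈ P, 1/((p:ℝ)-2) ≤ 2 * Real.log I + 9 := by
    rw [hsplit]; linarith
  have hlam : lam k ≤ (I:ℝ)^2 * Real.exp 9 := by
    calc lam k ≤ Real.exp (∑ p ∈ P, 1/((p:ℝ)-2)) := hexp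
      _ ≤ Real.exp (2 * Real.log I + 9) := Real.exp_le_exp.mpr hE
      _ = (I:ℝ)^2 * Real.exp 9 := by
          rw [show (2:ℝ) * Real.log I + 9 = Real.log I + Real.log I + 9 from by ring,
            Real.exp_add, Real.exp_add, Real.exp_log hIposR]
          ring
  -- bound I by log L
  have hIle : (I:ℝ) ≤ 7 * Real.log L := by
    have h2I : (2:ℕ)^I ≤ 2*(J+4) := by
      have h1 : 2^I = 2^(I-1) * 2 := by
        rw [← pow_succ, Nat.sub_add_cancel hI1]
      omega
    have hIlog : (I:ℝ) * Real.log 2 ≤ Real.log (2*((J:ℝ)+4)) := by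
      have hcast : ((2:ℝ))^I ≤ 2*((J:ℝ)+4) := by exact_mod_cast h2I
      have h := Real.log_le_log (by positivity) hcast
      rw [Real.log_pow] at h
      push_cast at h
      linarith
    have hJL : (J:ℝ) * Real.log 2 ≤ L := by
      have h1 : ((2:ℝ))^J ≤ (k:ℝ) := by exact_mod_cast hJk
      have h2 := Real.log_le_log (by positivity) h1
      rw [Real.log_pow] at h2
      have h3 : Real.log (k:ℝ) ≤ L := by
        rw [hLdef]
        apply Real.log_le_log (by linarith)
        nlinarith
      push_cast at h2
      linarith
    have hl2lb : (0.6931 : ℝ) < Real.log 2 := by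
      have := Real.log_two_gt_d9; linarith
    have hl2ub : Real.log 2 < (0.6932 : ℝ) := by
      have := Real.log_two_lt_d9; linarith
    have hJ0 : (0:ℝ) ≤ (J:ℝ) := by positivity
    have hJ2L : (J:ℝ) ≤ 2*L := by nlinarith
    have h8L : 2*((J:ℝ)+4) ≤ 8*L := by nlinarith
    have hlog8L : Real.log (2*((J:ℝ)+4)) ≤ Real.log (8*L) :=
      Real.log_le_log (by linarith) h8L
    have hlog8 : Real.log (8*L) = 3*Real.log 2 + Real.log L := by
      rw [Real.log_mul (by norm_num) (by linarith),
        show (8:ℝ) = 2^3 from by norm_num, Real.log_pow]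
      push_cast; ring
    have hIof : (I:ℝ) * Real.log 2 ≤ 3*Real.log 2 + Real.log L := by
      rw [← hlog8]; linarith
    nlinarith [hIposR, mul_le_mul_of_nonneg_left hl2lb.le hIposR.le, hlogL]
  -- finish
  have hIsq : (I:ℝ)^2 ≤ 49 * Real.log L ^ 2 := by
    have h := pow_le_pow_left₀ (by positivity) hIle 2
    calc (I:ℝ)^2 ≤ (7 * Real.log L)^2 := h
      _ = 49 * Real.log L ^ 2 := by ring
  have hexp9 : (0:ℝ) < Real.exp 9 := Real.exp_pos 9
  nlinarith [hlam, hIsq, hexp9]
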